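/- arXiv:1705.10277 — 11 statements merged into one kernel-verified Lean document; each statement's English description precedes it below -/
import Mathlib

section
/- Let x, y, w, r be nonempty words with w = xr = ry and |x| < |r| (i.e., the two occurrences of r in w overlap). Then there exists a nonempty word r' such that w = x'r' = r'y' with |r'| < |x'|, and y' and y start with the same letter. -/
private lemma aux1 {α : Type*} : ∀ (n : ℕ) (x y r : List α), r.length ≤ n →
    x ≠ [] → y ≠ [] → x.length < r.length → x ++ r = r ++ y →
    ∃ r' x' y' : List α, r' ≠ [] ∧ x ++ r = x' ++ r' ∧ x ++ r = r' ++ y' ∧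
      r'.length < x'.length ∧ y'.head? = y.head? := by
  intro n
  induction n with
  | zero => intro x y r hn hx hy hlt heq; omega
  | succ n ih =>
    intro x y r hn hx hy hlt heq
    -- x is a prefix of r
    have hxr : x <+: r := by
      apply List.prefix_of_prefix_length_le (l₂ := r) (l₃ := r ++ y)
      · rw [← heq]; exact List.prefix_append x r
      · exact List.prefix_append r y
      · omega
    obtain ⟨s, hs⟩ := hxr
    have hslen : s.length = r.length - x.length := by
      have := congrArg List.length hs; simp at this; omega
    have hsne : s ≠ [] := by
      intro h; subst h; simp at hslen; omega
    have hxlen : 0 < x.length := List.length_pos_iff.mpr hx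
    -- cancel x : x ++ s = s ++ y
    have key : x ++ s = s ++ y := by
      apply List.append_cancel_left (as := x)
      calc x ++ (x ++ s) = x ++ r := by rw [hs]
        _ = r ++ y := heq
        _ = x ++ (s ++ y) := by rw [← hs, List.append_assoc]
    by_cases hc : x.length < s.length
    · -- recurse
      have hsn : s.length ≤ n := by omega
      obtain ⟨r', x', y', hr'ne, he1, he2, hlen, hhead⟩ := ih x y s hsn hx hy hc key
      have hy'ne : y' ≠ [] := by
        intro h; subst h
        simp at hhead
        exact hy (List.head?_eq_none_iff.mp hhead.symm)
      refine ⟨r', x ++ x', y' ++ y, hr'ne, ?_, ?_, ?_, ?_⟩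
      · rw [← hs, he1, List.append_assoc]
      · rw [heq, ← hs, he2, List.append_assoc]
      · simp; omega
      · cases y' with
        | nil => exact absurd rfl hy'ne
        | cons a t => simpa using hhead
    · -- base case: take r' = s
      refine ⟨s, x ++ x, y ++ y, hsne, ?_, ?_, ?_, ?_⟩
      · rw [← hs, List.append_assoc]
      · rw [heq, ← hs, key, List.append_assoc]
      · have : 0 < x.length := List.length_pos_iff.mpr hx
        simp; omega
      · cases y with
        | nil => exact absurd rfl hy
        | cons a t => simp

theorem stmt1 {α : Type*} (x y w r : List α)
    (hx : x ≠ []) (hy : y ≠ []) (hw : w ≠ []) (hr : r ≠ [])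
    (h1 : w = x ++ r) (h2 : w = r ++ y) (hlt : x.length < r.length) :
    ∃ r' x' y' : List α, r' ≠ [] ∧ w = x' ++ r' ∧ w = r' ++ y' ∧
      r'.length < x'.length ∧ y'.head? = y.head? := by
  subst h1
  exact aux1 r.length x y r le_rfl hx hy hlt h2
end

section
/- Every nonempty prefix of an inverse Lyndon word is an inverse Lyndon word. -/
def LexLt {α : Type*} [LinearOrder α] (x y : List α) : Prop :=
  List.Lex (· < ·) x y

def IsInvLyndonWord {α : Type*} [LinearOrder α] (w : List α) : Prop :=
  w ≠ [] ∧ ∀ s : List α, s <:+ w → s ≠ w → s ≠ [] → LexLt s w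

lemma lex_of_append {α : Type*} [LinearOrder α] :
    ∀ (s p t : List α), s.length < p.length →
      List.Lex (· < ·) (s ++ t) (p ++ t) → List.Lex (· < ·) s p := by
  intro s
  induction s with
  | nil =>
    intro p t hl _
    cases p with
    | nil => simp at hl
    | cons b p' => exact List.Lex.nil
  | cons a s' ih =>
    intro p t hl hlex
    cases p with
    | nil => simp at hl
    | cons b p' =>
      cases hlex with
      | rel h => exact List.Lex.rel h
      | cons h => exact List.Lex.cons (ih p' t (by simpa using hl) h)

theorem stmt2 {α : Type*} [LinearOrder α] (w p : List α)
    (hw : IsInvLyndonWord w) (hp : p ≠ []) (hpw : p <+: w) :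
    IsInvLyndonWord p := by
  obtain ⟨t, rfl⟩ := hpw
  refine ⟨hp, fun s hs hsp hsne => ?_⟩
  obtain ⟨u, rfl⟩ := hs
  have hlen : s.length < (u ++ s).length := by
    have : s ≠ u ++ s := hsp
    rcases Nat.lt_or_ge s.length (u ++ s).length with h | h
    · exact h
    · exfalso
      apply this
      have hu : u.length = 0 := by
        simp only [List.length_append] at h; omega
      have : u = [] := List.length_eq_zero_iff.mp hu
      simp [this]
  have hsuf : s ++ t <:+ (u ++ s) ++ t := ⟨u, by simp⟩
  have hne : s ++ t ≠ (u ++ s) ++ t := fun h => hsp (List.append_cancel_right h)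
  have hne2 : s ++ t ≠ [] := by simp [hsne]
  have := hw.2 (s ++ t) hsuf hne hne2
  exact lex_of_append s (u ++ s) t hlen this
end

section
/- If a nonempty word w is not an inverse Lyndon word, then there exists a nonempty proper prefix p of w, with w = ps, such that p ≪ s. -/
def LexLl {α : Type*} [LinearOrder α] (x y : List α) : Prop :=
  LexLt x y ∧ ¬ (x <+: y ∧ x ≠ y)

private lemma lex_self_append_cons {α : Type*} [LinearOrder α] (x : List α) (b : α) (t : List α) :
    List.Lex (· < ·) x (x ++ b :: t) := by
  induction x with
  | nil => exact List.Lex.nil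
  | cons a l ih => exact List.Lex.cons ih

private lemma le_self_append {α : Type*} [LinearOrder α] (x t : List α) : x ≤ x ++ t := by
  cases t with
  | nil => simp
  | cons b t => exact le_of_lt (lex_self_append_cons x b t)

private lemma le_append_of_le {α : Type*} [LinearOrder α] {x y : List α} (h : x ≤ y) (z : List α) :
    x ≤ y ++ z := by
  rcases h.lt_or_eq with h | h
  · exact le_of_lt (List.Lex.append_right _ z h)
  · subst h; exact le_self_append x z

private lemma lt_of_append_lt_append {α : Type*} [LinearOrder α] {p s t : List α}
    (h : p ++ s < p ++ t) : s < t := by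
  by_contra hc
  rcases (not_lt.mp hc).lt_or_eq with h' | h'
  · exact absurd h (not_lt.mpr (le_of_lt (List.Lex.append_left _ h' p)))
  · subst h'; exact lt_irrefl _ h

private lemma aux {α : Type*} [LinearOrder α] (w : List α) :
    ∀ n (s : List α), s.length = n → s <:+ w → s ≠ w → s ≠ [] → w < s →
      ∃ p s' : List α, p ≠ [] ∧ s' ≠ [] ∧ w = p ++ s' ∧ LexLl p s' := by
  intro n
  induction n using Nat.strong_induction_on with
  | _ n ih =>
    intro s hn hsuf hsw hsne hws
    obtain ⟨p, hp⟩ := hsuf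
    have hpne : p ≠ [] := by
      rintro rfl; exact hsw (by simpa using hp)
    by_cases hpre : p <+: s ∧ p ≠ s
    · -- p is a proper prefix of s; find a shorter bad suffix
      obtain ⟨⟨t, ht⟩, hps⟩ := hpre
      have hst : s < t := by
        apply lt_of_append_lt_append (p := p)
        calc p ++ s = w := hp
        _ < s := hws
        _ = p ++ t := ht.symm
      have hwt : w < t := lt_trans hws hst
      have htne : t ≠ [] := by
        rintro rfl
        exact absurd hwt (by simp)
      have htlen : t.length < s.length := by
        have h1 := congrArg List.length ht
        have h2 : 0 < p.length := List.length_pos_iff.mpr hpne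
        simp at h1
        omega
      have htw : t ≠ w := by
        intro h
        have hl : w.length < s.length := by rw [← h]; exact htlen
        have : s.length ≤ w.length := List.IsSuffix.length_le ⟨p, hp⟩
        omega
      have htsuf : t <:+ w := List.IsSuffix.trans ⟨p, ht⟩ ⟨p, hp⟩
      exact ih t.length (hn ▸ htlen) t rfl htsuf htw htne hwt
    · -- p is not a proper prefix of s: this p works
      refine ⟨p, s, hpne, hsne, hp.symm, ?_, hpre⟩
      show List.Lex (· < ·) p s
      show p < s
      by_contra hc
      have hsp : s ≤ p := not_lt.mp hc
      have : s ≤ p ++ s := le_append_of_le hsp s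
      rw [hp] at this
      exact absurd hws (not_lt.mpr this)

theorem stmt4 {α : Type*} [LinearOrder α] (w : List α)
    (hw : w ≠ []) (h : ¬ IsInvLyndonWord w) :
    ∃ p s : List α, p ≠ [] ∧ s ≠ [] ∧ w = p ++ s ∧ LexLl p s := by
  rw [IsInvLyndonWord] at h
  push_neg at h
  obtain ⟨s, hsuf, hsw, hsne, hlt⟩ := h hw
  have hws : w < s := by
    rcases lt_trichotomy w s with h | h | h
    · exact h
    · exact absurd h.symm hsw
    · exact absurd h hlt
  exact aux w s.length s rfl hsuf hsw hsne hws
end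

section
/- A nonempty word w is not an inverse Lyndon word if and only if there exist words r, u, t and letters a, b with a < b such that w = r a u r b t. -/
private lemma lexlt_trans {α : Type*} [LinearOrder α] :
    ∀ {x y z : List α}, List.Lex (· < ·) x y → List.Lex (· < ·) y z →
      List.Lex (· < ·) x z
  | _, _, _, List.Lex.nil, List.Lex.rel _ => List.Lex.nil
  | _, _, _, List.Lex.nil, List.Lex.cons _ => List.Lex.nil
  | _, _, _, List.Lex.rel h₁, List.Lex.rel h₂ => List.Lex.rel (h₁.trans h₂)
  | _, _, _, List.Lex.rel h₁, List.Lex.cons _ => List.Lex.rel h₁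
  | _, _, _, List.Lex.cons _, List.Lex.rel h₂ => List.Lex.rel h₂
  | _, _, _, List.Lex.cons h₁, List.Lex.cons h₂ =>
      List.Lex.cons (lexlt_trans h₁ h₂)

private lemma lexlt_append_cancel {α : Type*} [LinearOrder α] :
    ∀ (p : List α) {x y : List α}, List.Lex (· < ·) (p ++ x) (p ++ y) →
      List.Lex (· < ·) x y
  | [], _, _, h => h
  | c :: p, x, y, h => by
    cases h with
    | rel h' => exact absurd h' (lt_irrefl c)
    | cons h' => exact lexlt_append_cancel p h'

private lemma lexlt_cases {α : Type*} [LinearOrder α] :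
    ∀ {w s : List α}, List.Lex (· < ·) w s →
      w <+: s ∨ ∃ (r x y : List α) (a b : α), a < b ∧
        w = r ++ a :: x ∧ s = r ++ b :: y
  | _, _, List.Lex.nil => Or.inl (List.nil_prefix)
  | _, _, @List.Lex.rel _ _ a x b y h =>
      Or.inr ⟨[], x, y, a, b, h, rfl, rfl⟩
  | _, _, @List.Lex.cons _ _ c x y h => by
    rcases lexlt_cases h with hp | ⟨r, x', y', a, b, hab, rfl, rfl⟩
    · exact Or.inl (List.cons_prefix_cons.mpr ⟨rfl, hp⟩)
    · exact Or.inr ⟨c :: r, x', y', a, b, hab, rfl, rfl⟩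

private lemma lexlt_trichotomy {α : Type*} [LinearOrder α] (x y : List α) :
    List.Lex (· < ·) x y ∨ x = y ∨ List.Lex (· < ·) y x :=
  @trichotomous (List α) (List.Lex (· < ·)) (List.Lex.trichotomous _) x y

private lemma lexlt_asymm {α : Type*} [LinearOrder α] {x y : List α}
    (h : List.Lex (· < ·) x y) : ¬ List.Lex (· < ·) y x :=
  (List.Lex.asymm (α := α) (· < ·)).asymm x y h

theorem stmt5 {α : Type*} [LinearOrder α] (w : List α) (hw : w ≠ []) :
    ¬ IsInvLyndonWord w ↔
      ∃ (r u t : List α) (a b : α), a < b ∧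
        w = r ++ [a] ++ u ++ r ++ [b] ++ t := by
  constructor
  · intro hnl
    rw [IsInvLyndonWord] at hnl
    push_neg at hnl
    obtain ⟨s, hsuf, hsne, hsnil, hnlt⟩ := hnl hw
    clear hw
    have key : ∀ n (s : List α), s.length = n → s <:+ w → s ≠ w → s ≠ [] →
        ¬ LexLt s w → ∃ (r u t : List α) (a b : α), a < b ∧
          w = r ++ [a] ++ u ++ r ++ [b] ++ t := by
      intro n
      induction n using Nat.strong_induction_on with
      | _ n ih =>
        rintro s rfl hsuf hsne hsnil hnlt
        have hws : List.Lex (· < ·) w s := by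
          rcases lexlt_trichotomy w s with h | h | h
          · exact h
          · exact absurd h.symm hsne
          · exact absurd h hnlt
        obtain ⟨p, hp⟩ := hsuf
        have hpne : p ≠ [] := by
          rintro rfl; exact hsne (by simpa using hp)
        have hplen : 0 < p.length := List.length_pos_iff.mpr hpne
        have hslen : s.length < w.length := by
          rw [← hp, List.length_append]; omega
        rcases lexlt_cases hws with hpre | ⟨r, x, y, a, b, hab, hwx, hsy⟩
        · exact absurd hpre.length_le (by omega)
        · by_cases hrp : r.length + 1 ≤ p.length
          · have h1 : (r ++ [a]) <+: w := ⟨x, by simpa using hwx.symm⟩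
            have h2 : p <+: w := ⟨s, hp⟩
            have h3 : (r ++ [a]) <+: p :=
              List.prefix_of_prefix_length_le h1 h2 (by simpa using hrp)
            obtain ⟨u, hu⟩ := h3
            refine ⟨r, u, y, a, b, hab, ?_⟩
            rw [← hp, ← hu, hsy]
            simp
          · have h1 : p <+: w := ⟨s, hp⟩
            have h2 : r <+: w := ⟨a :: x, hwx.symm⟩
            have h3 : p <+: r :=
              List.prefix_of_prefix_length_le h1 h2 (by omega)
            obtain ⟨r₂, hr₂⟩ := h3
            -- s = p ++ s₂, with s₂ = r₂ ++ b :: y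
            set s₂ : List α := r₂ ++ b :: y with hs₂def
            have hss₂ : s = p ++ s₂ := by
              rw [hsy, ← hr₂]; simp; rfl
            have hs₂suf : s₂ <:+ w := by
              refine ⟨p ++ p, ?_⟩
              rw [← hp, hss₂]; simp
            have hsplit : s.length = p.length + s₂.length := by
              rw [hss₂, List.length_append]
            have hs₂len : s₂.length < s.length := by omega
            have hs₂nil : s₂ ≠ [] := by simp [hs₂def]
            have hs₂ne : s₂ ≠ w := by
              intro he
              have := congrArg List.length he
              omega
            -- w ≺ s₂
            have hws₂ : List.Lex (· < ·) w s₂ := by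
              have h4 : List.Lex (· < ·) (p ++ s) (p ++ s₂) := by
                rw [hp, ← hss₂]; exact hws
              exact lexlt_trans hws (lexlt_append_cancel p h4)
            exact ih s₂.length hs₂len s₂ rfl hs₂suf hs₂ne hs₂nil
              (lexlt_asymm hws₂)
    exact key s.length s rfl hsuf hsne hsnil hnlt
  · rintro ⟨r, u, t, a, b, hab, rfl⟩
    rintro ⟨-, h⟩
    have hsuf : (r ++ [b] ++ t) <:+ (r ++ [a] ++ u ++ r ++ [b] ++ t) :=
      ⟨r ++ [a] ++ u, by simp⟩
    have hlen : (r ++ [b] ++ t).length < (r ++ [a] ++ u ++ r ++ [b] ++ t).length := by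
      simp; omega
    have hne : (r ++ [b] ++ t) ≠ (r ++ [a] ++ u ++ r ++ [b] ++ t) := by
      intro he; rw [← he] at hlen; omega
    have hlt := h _ hsuf hne (by simp)
    have hwlt : List.Lex (· < ·) (r ++ [a] ++ u ++ r ++ [b] ++ t) (r ++ [b] ++ t) := by
      have : List.Lex (· < ·) (r ++ (a :: (u ++ r ++ [b] ++ t))) (r ++ (b :: t)) :=
        List.Lex.append_left _ (List.Lex.rel hab) r
      simpa using this
    exact lexlt_asymm hwlt hlt
end

section
/- Let w be a nonempty word and let (p, p̄) be in Pref_bre(w). Then there exist words r, s and letters a, b with a < b such that p = ras and p̄ = rb. -/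
def IsBre {α : Type*} [LinearOrder α] (w p pb : List α) : Prop :=
  IsInvLyndonWord p ∧
  (∃ v : List α, v ≠ [] ∧ w = p ++ v ∧ pb <+: v) ∧
  pb ≠ [] ∧ IsInvLyndonWord pb ∧
  (∀ z' : List α, z' ≠ [] → z' <+: pb → z' ≠ pb → IsInvLyndonWord (p ++ z')) ∧
  ¬ IsInvLyndonWord (p ++ pb) ∧ LexLl p pb

lemma lex_decomp {α : Type*} [LinearOrder α] :
    ∀ {p q : List α}, List.Lex (· < ·) p q →
      p <+: q ∨ ∃ r a b s t, a < b ∧ p = r ++ a :: s ∧ q = r ++ b :: t := by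
  intro p q h
  induction h with
  | nil => exact Or.inl (List.nil_prefix)
  | @cons x l₁ l₂ h ih =>
    rcases ih with hpre | ⟨r, a, b, s, t, hab, h1, h2⟩
    · obtain ⟨k, hk⟩ := hpre
      exact Or.inl ⟨k, by simp [hk]⟩
    · exact Or.inr ⟨x :: r, a, b, s, t, hab, by simp [h1], by simp [h2]⟩
  | @rel a l₁ b l₂ hab =>
    exact Or.inr ⟨[], a, b, l₁, l₂, hab, rfl, rfl⟩

lemma not_lex_ge {α : Type*} [LinearOrder α] {a b : α} (hab : a < b) :
    ∀ (r : List α) (u v : List α), ¬ List.Lex (· < ·) (r ++ b :: u) (r ++ a :: v) := by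
  intro r
  induction r with
  | nil =>
    intro u v h
    cases h with
    | cons h => exact absurd hab (lt_irrefl _)
    | rel h => exact absurd (h.trans hab) (lt_irrefl _)
  | cons x r ih =>
    intro u v h
    cases h with
    | cons h => exact ih u v h
    | rel h => exact absurd h (lt_irrefl _)

theorem stmt7 {α : Type*} [LinearOrder α] (w p pb : List α)
    (hw : w ≠ []) (h : IsBre w p pb) :
    ∃ (r s : List α) (a b : α), a < b ∧
      p = r ++ [a] ++ s ∧ pb = r ++ [b] := by
  obtain ⟨hp, _, hpbne, hpb, hz, hnot, hlt, hnpre⟩ := h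
  have hne : p ≠ pb := fun e => by subst e; exact List.lex_irrefl (fun x => lt_irrefl x) _ hlt
  rcases lex_decomp hlt with hpre | ⟨r, a, b, s, t, hab, h1, h2⟩
  · exact absurd ⟨hpre, hne⟩ hnpre
  rcases eq_or_ne t [] with rfl | ht
  · exact ⟨r, s, a, b, hab, by simp [h1], by simp [h2]⟩
  · exfalso
    -- z' = r ++ [b] is a nonempty proper prefix of pb
    have hz'pre : r ++ [b] <+: pb := ⟨t, by simp [h2]⟩
    have hz'ne : r ++ [b] ≠ pb := by
      intro e
      rw [h2] at e
      have := congrArg List.length e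
      simp at this
      exact ht this
    have hil := hz (r ++ [b]) (by simp) hz'pre hz'ne
    have hsuf : (r ++ [b]) <:+ p ++ (r ++ [b]) := ⟨p, rfl⟩
    have hneq : (r ++ [b]) ≠ p ++ (r ++ [b]) := by
      intro e
      have := congrArg List.length e
      simp at this
      exact hp.1 this
    have hlex := hil.2 _ hsuf hneq (by simp)
    unfold LexLt at hlex
    rw [h1] at hlex
    have : (r ++ a :: s) ++ (r ++ [b]) = r ++ a :: (s ++ r ++ [b]) := by simp
    rw [this] at hlex
    exact not_lex_ge hab r [] _ hlex
end

section
/- A nonempty word w is not an inverse Lyndon word if and only if the set Pref_bre(w) is nonempty. -/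
section Helpers

variable {α : Type*} [LinearOrder α]

lemma lexLt_trans {x y z : List α} (h1 : LexLt x y) (h2 : LexLt y z) : LexLt x z :=
  lt_trans (α := List α) h1 h2

lemma lexLt_asymm {x y : List α} (h : LexLt x y) : ¬ LexLt y x :=
  asymm (r := List.Lex (· < · : α → α → Prop)) h

lemma lexLt_trichotomy (x y : List α) : LexLt x y ∨ x = y ∨ LexLt y x :=
  trichotomous (r := List.Lex (· < · : α → α → Prop)) x y

lemma lexLt_of_prefix_ne {x y : List α} (h : x <+: y) (hne : x ≠ y) : LexLt x y := by
  obtain ⟨t, rfl⟩ := h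
  cases t with
  | nil => simp at hne
  | cons a t =>
    have h2 : List.Lex (· < ·) (x ++ []) (x ++ a :: t) := List.Lex.append_left _ List.Lex.nil x
    simpa [LexLt] using h2

lemma lexLt_append_right {x y : List α} (z : List α) (h : LexLt x y) : LexLt x (y ++ z) :=
  List.Lex.append_right _ z h

lemma lexLt_append_left_cancel {p x y : List α} (h : LexLt (p ++ x) (p ++ y)) : LexLt x y := by
  induction p with
  | nil => exact h
  | cons a p ih => exact ih ((List.lex_cons_iff).1 h)

lemma lexLt_of_append_lexLt : ∀ {s p u : List α}, LexLt (s ++ u) (p ++ u) →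
    s.length ≤ p.length → LexLt s p ∨ s <+: p := by
  intro s
  induction s with
  | nil => intro p u _ _; exact Or.inr (List.nil_prefix)
  | cons a s ih =>
    intro p u h hlen
    cases p with
    | nil => simp at hlen
    | cons b p =>
      cases h with
      | cons h =>
        rcases ih h (by simpa using hlen) with h' | h'
        · exact Or.inl (List.Lex.cons h')
        · exact Or.inr ((List.cons_prefix_cons).2 ⟨rfl, h'⟩)
      | rel h => exact Or.inl (List.Lex.rel h)

lemma ilw_prefix {w p : List α} (hw : IsInvLyndonWord w) (hp : p <+: w) (hne : p ≠ []) :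
    IsInvLyndonWord p := by
  obtain ⟨r, rfl⟩ := hp
  refine ⟨hne, fun s hs hsp hsnil => ?_⟩
  have hsr : s ++ r <:+ p ++ r := by
    obtain ⟨u, rfl⟩ := hs
    exact ⟨u, by simp⟩
  have hne2 : s ++ r ≠ p ++ r := fun h => hsp (List.append_cancel_right h)
  have hlex : LexLt (s ++ r) (p ++ r) :=
    hw.2 _ hsr hne2 (by simp [hsnil])
  have hlen : s.length ≤ p.length := by simpa using hs.length_le
  rcases lexLt_of_append_lexLt hlex hlen with h | h
  · exact h
  · exact lexLt_of_prefix_ne h hsp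

/-- A shortest nonempty prefix of `w` that is not an inverse Lyndon word. -/
lemma exists_min_bad_prefix :
    ∀ n (w : List α), w.length ≤ n → w ≠ [] → ¬ IsInvLyndonWord w →
    ∃ z, z <+: w ∧ z ≠ [] ∧ ¬ IsInvLyndonWord z ∧
      ∀ u, u <+: z → u ≠ [] → u ≠ z → IsInvLyndonWord u := by
  intro n
  induction n with
  | zero => intro w hn hw _; simp [List.length_eq_zero_iff.1 (Nat.le_zero.1 hn)] at hw
  | succ n ih =>
    intro w hn hw hbad
    by_cases hall : ∀ u, u <+: w → u ≠ [] → u ≠ w → IsInvLyndonWord u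
    · exact ⟨w, List.prefix_refl w, hw, hbad, hall⟩
    · push_neg at hall
      obtain ⟨u, hu, hune, huw, hubad⟩ := hall
      have hlen : u.length < w.length := by
        rcases lt_or_eq_of_le hu.length_le with h | h
        · exact h
        · exact absurd (hu.eq_of_length h) huw
      obtain ⟨z, hz1, hz2, hz3, hz4⟩ := ih u (by omega) hune hubad
      exact ⟨z, hz1.trans hu, hz2, hz3, hz4⟩

/-- A shortest nonempty proper suffix `s` of `z` with `¬ LexLt s z`. -/
lemma exists_min_bad_suffix {z : List α} (hz : z ≠ []) (hbad : ¬ IsInvLyndonWord z) :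
    ∃ s, s <:+ z ∧ s ≠ [] ∧ s ≠ z ∧ ¬ LexLt s z ∧
      ∀ t, t <:+ z → t ≠ [] → t.length < s.length → LexLt t z := by
  have hex : ∃ s : List α, s <:+ z ∧ s ≠ z ∧ s ≠ [] ∧ ¬ LexLt s z := by
    by_contra h
    push_neg at h
    exact hbad ⟨hz, fun s hs hsne hsnil => h s hs hsne hsnil⟩
  obtain ⟨s₀, hs₀, hs₀z, hs₀nil, hs₀lex⟩ := hex
  have key : ∀ t : List α, t <:+ z → t = z.drop (z.length - t.length) := by
    intro t ht
    obtain ⟨u, rfl⟩ := ht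
    simp [List.drop_left']
  have P : ∃ m, 0 < m ∧ m < z.length ∧ ¬ LexLt (z.drop (z.length - m)) z := by
    refine ⟨s₀.length, List.length_pos_iff.2 hs₀nil, ?_, ?_⟩
    · rcases lt_or_eq_of_le hs₀.length_le with h | h
      · exact h
      · exact absurd (hs₀.eq_of_length h) hs₀z
    · rw [← key s₀ hs₀]; exact hs₀lex
  classical
  obtain ⟨hm1, hm2, hm3⟩ := Nat.find_spec P
  set m := Nat.find P with hm
  refine ⟨z.drop (z.length - m), List.drop_suffix _ _, ?_, ?_, hm3, ?_⟩
  · have : (z.drop (z.length - m)).length = m := by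
      rw [List.length_drop]; omega
    intro h; rw [h] at this; simp at this; omega
  · have : (z.drop (z.length - m)).length = m := by
      rw [List.length_drop]; omega
    intro h; rw [h] at this; omega
  · intro t ht htnil hlt
    have hlen : (z.drop (z.length - m)).length = m := by
      rw [List.length_drop]; omega
    rw [hlen] at hlt
    have htlt : t.length < z.length := by
      have := ht.length_le; omega
    by_contra hcon
    have : ¬ (0 < t.length ∧ t.length < z.length ∧ ¬ LexLt (z.drop (z.length - t.length)) z) :=
      Nat.find_min P hlt
    push_neg at this
    have h1 : 0 < t.length := List.length_pos_iff.2 htnil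
    have := this h1 htlt
    rw [← key t ht] at this
    exact hcon this

end Helpers

theorem stmt8 {α : Type*} [LinearOrder α] (w : List α) (hw : w ≠ []) :
    ¬ IsInvLyndonWord w ↔ ∃ p pb : List α, IsBre w p pb := by
  constructor
  · intro hbad
    obtain ⟨z, hzw, hznil, hzbad, hzmin⟩ :=
      exists_min_bad_prefix w.length w le_rfl hw hbad
    obtain ⟨s, hsz, hsnil, hsne, hslex, hsmin⟩ := exists_min_bad_suffix hznil hzbad
    -- z ≺ s
    have hzs : LexLt z s := by
      rcases lexLt_trichotomy s z with h | h | h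
      · exact absurd h hslex
      · exact absurd h hsne
      · exact h
    obtain ⟨p, hp⟩ := hsz
    have hpnil : p ≠ [] := by
      rintro rfl; exact hsne (by simpa using hp)
    -- p is not a prefix of s
    have hnotpre : ¬ (p <+: s ∧ p ≠ s) := by
      rintro ⟨⟨t, ht⟩, hpne⟩
      have htnil : t ≠ [] := by rintro rfl; exact hpne (by simpa using ht)
      have htz : t <:+ z := by
        refine List.IsSuffix.trans ?_ ⟨p, hp⟩
        exact ⟨p, ht⟩
      have htlen : t.length < s.length := by
        have : p.length + t.length = s.length := by
          rw [← ht]; simp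
        have hplen : 0 < p.length := List.length_pos_iff.2 hpnil
        omega
      have h1 : LexLt t z := hsmin t htz htnil htlen
      have h2 : LexLt s t := by
        apply lexLt_append_left_cancel (p := p)
        rw [hp, ht]; exact hzs
      exact lexLt_asymm h1 (lexLt_trans hzs h2)
    have hpns : p ≠ s := by
      rintro rfl
      have : LexLt p z := by
        apply lexLt_of_prefix_ne
        · exact ⟨p, hp⟩
        · rintro rfl; exact hsne rfl
      exact lexLt_asymm this hzs
    have hps : LexLt p s := by
      rcases lexLt_trichotomy p s with h | h | h
      · exact h
      · exact absurd h hpns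
      · -- s ≺ p gives s ≺ p ++ s = z, contradiction
        have : LexLt s z := by rw [← hp]; exact lexLt_append_right s h
        exact absurd this (lexLt_asymm hzs)
    refine ⟨p, s, ?_, ?_, hsnil, ?_, ?_, ?_, hps, hnotpre⟩
    · -- p is an inverse Lyndon word
      refine hzmin p ⟨s, hp⟩ hpnil ?_
      rintro rfl
      exact hsnil (List.append_cancel_left (hp.trans (List.append_nil p).symm))
    · -- witness v
      obtain ⟨r, hr⟩ := hzw
      refine ⟨s ++ r, by simp [hsnil], ?_, ⟨r, rfl⟩⟩
      rw [← hr, ← hp, List.append_assoc]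
    · -- s is an inverse Lyndon word
      refine ⟨hsnil, fun t ht htne htnil => ?_⟩
      have htz : t <:+ z := ht.trans ⟨p, hp⟩
      have htlen : t.length < s.length := by
        rcases lt_or_eq_of_le ht.length_le with h | h
        · exact h
        · exact absurd (ht.eq_of_length h) htne
      exact lexLt_trans (hsmin t htz htnil htlen) hzs
    · -- proper prefixes extend
      intro z' hz'nil hz'pre hz'ne
      have h1 : p ++ z' <+: z := by
        rw [← hp]
        obtain ⟨u, hu⟩ := hz'pre
        exact ⟨u, by rw [List.append_assoc, hu]⟩
      refine hzmin _ h1 (by simp [hpnil]) ?_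
      rw [← hp]
      intro h
      exact hz'ne (List.append_cancel_left h)
    · -- p ++ s = z is not ILW
      rw [hp]; exact hzbad
  · rintro ⟨p, pb, hp1, ⟨v, hvnil, hwv, hpbv⟩, hpbnil, _, _, hbad, _⟩
    intro hilw
    apply hbad
    refine ilw_prefix hilw ?_ (by simp [hp1.1])
    rw [hwv]
    obtain ⟨u, hu⟩ := hpbv
    exact ⟨u, by rw [List.append_assoc, hu]⟩
end

section
/- Let w be a nonempty word which is not an inverse Lyndon word, and let (p, p̄) ∈ Pref_bre(w). Then p p̄ is the shortest nonempty prefix of w which is not an inverse Lyndon word. -/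
namespace Stmt11Aux

variable {α : Type*} [LinearOrder α]

lemma lexlt_of_proper_prefix {a b : List α} (hab : a <+: b) (hne : a ≠ b) : LexLt a b := by
  obtain ⟨t, rfl⟩ := hab
  cases t with
  | nil => exact absurd (List.append_nil a).symm hne
  | cons c t' =>
    have : List.Lex (· < ·) (a ++ ([] : List α)) (a ++ (c :: t')) :=
      List.Lex.append_left _ List.Lex.nil a
    simp only [List.append_nil] at this
    exact this

lemma lexlt_trans {a b c : List α} (h1 : LexLt a b) (h2 : LexLt b c) : LexLt a c :=
  List.lex_trans (fun h₁ h₂ => lt_trans h₁ h₂) h1 h2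

/-- Key lemma: if `a ≺ v`, `b <+: v` and `|a| < |b|` then `a ≺ b`. -/
lemma lexlt_of_lexlt_prefix : ∀ {a v b : List α}, LexLt a v → b <+: v →
    a.length < b.length → LexLt a b := by
  intro a v b h
  induction h generalizing b with
  | nil =>
    intro hb hlen
    cases b with
    | nil => simp at hlen
    | cons y l' => exact List.Lex.nil
  | @cons x l₁ l₂ h ih =>
    intro hb hlen
    cases b with
    | nil => simp at hlen
    | cons y l' =>
      obtain ⟨rfl, hl'⟩ : y = x ∧ l' <+: l₂ := by
        obtain ⟨t, ht⟩ := hb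
        simp only [List.cons_append, List.cons.injEq] at ht
        exact ⟨ht.1, ⟨t, ht.2⟩⟩
      exact List.Lex.cons (ih hl' (by simpa using hlen))
  | @rel a₁ l₁ a₂ l₂ hr =>
    intro hb hlen
    cases b with
    | nil => simp at hlen
    | cons y l' =>
      obtain ⟨t, ht⟩ := hb
      simp only [List.cons_append, List.cons.injEq] at ht
      obtain ⟨h1, h2⟩ := ht
      subst h1
      exact List.Lex.rel hr

/-- Nonempty prefixes of inverse Lyndon words are inverse Lyndon words. -/
lemma isInvLyndon_prefix {p x : List α} (hp : IsInvLyndonWord p) (hx : x <+: p)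
    (hxne : x ≠ []) : IsInvLyndonWord x := by
  refine ⟨hxne, fun s hs hsx hsne => ?_⟩
  obtain ⟨u, rfl⟩ := hs
  obtain ⟨t, rfl⟩ := hx
  have hu : u ≠ [] := by rintro rfl; exact hsx rfl
  have hst : LexLt (s ++ t) (u ++ s ++ t) := by
    refine hp.2 (s ++ t) ⟨u, by simp⟩ ?_ (by simp [hsne])
    intro heq
    have := congrArg List.length heq
    simp at this
    exact hu this
  have hslt : LexLt s (u ++ s ++ t) := by
    rcases eq_or_ne t [] with rfl | ht0
    · simpa using hst
    · refine lexlt_trans (lexlt_of_proper_prefix ⟨t, rfl⟩ ?_) hst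
      intro heq
      have := congrArg List.length heq
      simp at this
      exact ht0 this
  refine lexlt_of_lexlt_prefix hslt ⟨t, rfl⟩ ?_
  have : 0 < u.length := List.length_pos_iff.mpr hu
  simp only [List.length_append]
  omega

end Stmt11Aux

theorem stmt11 {α : Type*} [LinearOrder α] (w p pb : List α)
    (hw : w ≠ []) (hnw : ¬ IsInvLyndonWord w) (h : IsBre w p pb) :
    (p ++ pb) <+: w ∧ p ++ pb ≠ [] ∧ ¬ IsInvLyndonWord (p ++ pb) ∧
    ∀ x : List α, x <+: w → x ≠ [] → ¬ IsInvLyndonWord x →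
      (p ++ pb).length ≤ x.length := by
  obtain ⟨hp, ⟨v, hv, hwv, hpbv⟩, hpb, hpbL, hz, hnppb, hll⟩ := h
  have hpre : (p ++ pb) <+: w := by
    obtain ⟨t, ht⟩ := hpbv
    exact ⟨t, by simp [hwv, ← ht]⟩
  have hpne : p ≠ [] := hp.1
  refine ⟨hpre, by simp [hpne], hnppb, ?_⟩
  intro x hxw hxne hxnl
  by_contra hlt
  push_neg at hlt
  rcases le_or_gt x.length p.length with hle | hgt
  · -- x is a prefix of p
    have hxp : x <+: p := by
      have hp_w : p <+: w := ⟨v, hwv.symm⟩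
      exact List.prefix_of_prefix_length_le hxw hp_w hle
    exact hxnl (Stmt11Aux.isInvLyndon_prefix hp hxp hxne)
  · -- p is a proper prefix of x, x = p ++ z with z a proper prefix of pb
    have hpx : p <+: x := List.prefix_of_prefix_length_le ⟨v, hwv.symm⟩ hxw hgt.le
    obtain ⟨z, rfl⟩ := hpx
    have hzpb : z <+: pb := by
      have hx_ppb : p ++ z <+: p ++ pb :=
        List.prefix_of_prefix_length_le hxw hpre hlt.le
      exact (List.prefix_append_right_inj p).mp hx_ppb
    have hzne : z ≠ [] := by
      rintro rfl
      simp at hgt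
    have hznepb : z ≠ pb := by
      intro heq
      subst heq
      exact absurd rfl (ne_of_lt hlt)
    exact hxnl (hz z hzne hzpb hznepb)
end

section
/- Let w be a nonempty word which is not an inverse Lyndon word. The shortest nonempty prefix of w which is not an inverse Lyndon word equals the shortest nonempty prefix x of w of the form x = r a u r b, where r, u are words and a, b letters with a < b. -/
section Helpers
variable {α : Type*} [LinearOrder α]

set_option linter.unusedSectionVars false

lemma gE {l : List α} {i j : ℕ} (hij : i = j) {hi : i < l.length}
    {hj : j < l.length} : l[i]'hi = l[j]'hj := by subst hij; rfl

lemma gE2 {l l' : List α} (h : l = l') {i : ℕ} {hi : i < l.length}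
    {hi' : i < l'.length} : l[i]'hi = l'[i]'hi' := by subst h; rfl

lemma lexlt_append_left (q : List α) {u v : List α}
    (h : List.Lex (· < ·) u v) : List.Lex (· < ·) (q ++ u) (q ++ v) := by
  induction q with
  | nil => exact h
  | cons a q ih => exact List.Lex.cons ih

lemma lexlt_of_append_left (q : List α) {u v : List α}
    (h : List.Lex (· < ·) (q ++ u) (q ++ v)) : List.Lex (· < ·) u v := by
  induction q with
  | nil => exact h
  | cons a q ih =>
    cases h with
    | cons h => exact ih h
    | rel h => exact absurd h (lt_irrefl a)

lemma lex_total {u v : List α} (h : ¬ List.Lex (· < ·) u v) (hne : v ≠ u) :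
    List.Lex (· < ·) v u := by
  induction v generalizing u with
  | nil =>
    cases u with
    | nil => exact absurd rfl hne
    | cons a u' => exact List.Lex.nil
  | cons b v' ih =>
    cases u with
    | nil => exact absurd List.Lex.nil h
    | cons a u' =>
      rcases lt_trichotomy b a with hba | hba | hba
      · exact List.Lex.rel hba
      · subst hba
        refine List.Lex.cons (ih ?_ ?_)
        · intro hl; exact h (List.Lex.cons hl)
        · intro he; exact hne (by rw [he])
      · exact absurd (List.Lex.rel hba) h

lemma lexlt_decomp {u v : List α} (h : List.Lex (· < ·) u v) :
    u <+: v ∨ ∃ (q : List α) (a b : α) (u' v' : List α),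
      a < b ∧ u = q ++ a :: u' ∧ v = q ++ b :: v' := by
  induction h with
  | nil => exact Or.inl List.nil_prefix
  | @rel a l₁ b l₂ h => exact Or.inr ⟨[], a, b, l₁, l₂, h, rfl, rfl⟩
  | @cons a l₁ l₂ h ih =>
    rcases ih with h1 | ⟨q, a', b', u', v', hab, hu, hv⟩
    · obtain ⟨tt, htt⟩ := h1
      exact Or.inl ⟨tt, by rw [List.cons_append, htt]⟩
    · exact Or.inr ⟨a :: q, a', b', u', v', hab, by rw [hu]; rfl, by rw [hv]; rfl⟩

lemma suffix_of_suffix_le {t s y : List α} (ht : t <:+ y) (hs : s <:+ y)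
    (h : t.length ≤ s.length) : t <:+ s := by
  obtain ⟨p, hp⟩ := ht
  obtain ⟨q, hq⟩ := hs
  have hlen : q.length ≤ p.length := by
    have h1 : p.length + t.length = y.length := by rw [← hp]; simp
    have h2 : q.length + s.length = y.length := by rw [← hq]; simp
    omega
  refine ⟨p.drop q.length, ?_⟩
  have h3 : (p ++ t).drop q.length = p.drop q.length ++ t :=
    List.drop_append_of_le_length hlen
  rw [← h3, hp, ← hq, List.drop_append_of_le_length (le_refl _), List.drop_length,
    List.nil_append]

lemma form_not_inv_lyndon {r u : List α} {a b : α} (hab : a < b) :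
    ¬ IsInvLyndonWord (r ++ [a] ++ u ++ r ++ [b]) := by
  rintro ⟨-, h⟩
  have hs : (r ++ [b]) <:+ (r ++ [a] ++ u ++ r ++ [b]) := ⟨r ++ [a] ++ u, by simp⟩
  have hne : (r ++ [b]) ≠ (r ++ [a] ++ u ++ r ++ [b]) := by
    intro he
    have := congrArg List.length he
    simp at this
  have hlex := h _ hs hne (by simp)
  have hlex2 : List.Lex (· < ·) (r ++ [a] ++ u ++ r ++ [b]) (r ++ [b]) := by
    have h0 : List.Lex (· < ·) (a :: (u ++ r ++ [b])) [b] := List.Lex.rel hab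
    have := lexlt_append_left r h0
    simpa [List.append_assoc] using this
  exact (asymm_of (List.Lex (· < ·)) hlex2) hlex

lemma border_lemma :
    ∀ (n : ℕ) (y : List α) (c : α) (t : List α), t.length ≤ n →
    t <+: y → t <:+ y → ∀ (hlt : t.length < y.length), y[t.length]'hlt < c →
    ∃ (r u : List α) (a b : α), a < b ∧ y ++ [c] = r ++ [a] ++ u ++ r ++ [b] := by
  intro n
  induction n with
  | zero =>
    intro y c t htn hpre hsuf hlt hc
    have ht0 : t = [] := List.length_eq_zero_iff.mp (Nat.le_zero.mp htn)
    subst ht0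
    obtain ⟨z₀, z₁, hz⟩ := List.exists_cons_of_ne_nil
      (List.length_pos_iff.mp (by simpa using hlt))
    subst hz
    exact ⟨[], z₁, z₀, c, by simpa using hc, by simp⟩
  | succ n ih =>
    intro y c t htn hpre hsuf hlt hc
    by_cases hcase : 2 * t.length + 1 ≤ y.length
    · -- non-overlapping: direct construction
      obtain ⟨z, hz⟩ := hpre
      have hzne : z ≠ [] := by
        intro h0
        subst h0
        simp at hz
        subst hz
        simp at hlt
      obtain ⟨z₀, z₁, hz'⟩ := List.exists_cons_of_ne_nil hzne
      subst hz'
      subst hz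
      have ha : (t ++ z₀ :: z₁)[t.length]'hlt = z₀ := by
        rw [List.getElem_append_right (le_refl _)]
        simp
      have hz₁suf : z₁ <:+ t ++ z₀ :: z₁ := ⟨t ++ [z₀], by simp⟩
      have hlen' : t.length ≤ z₁.length := by
        simp [List.length_append] at hcase
        omega
      obtain ⟨u, hu⟩ := suffix_of_suffix_le hsuf hz₁suf hlen'
      refine ⟨t, u, z₀, c, by rw [← ha]; exact hc, ?_⟩
      rw [← hu]
      simp
    · -- overlapping: shrink the border
      have hp1 : 1 ≤ y.length - t.length := by omega
      have hpt : y.length - t.length ≤ t.length := by omega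
      set p := y.length - t.length with hp
      obtain ⟨v, hv⟩ := hsuf
      have hvlen : v.length = p := by
        have := congrArg List.length hv
        simp at this
        omega
      obtain ⟨z, hz⟩ := hpre
      have hzlen : z.length = p := by
        have := congrArg List.length hz
        simp at this
        omega
      have hper : ∀ (j : ℕ) (hj : j < t.length),
          y[p + j]'(by omega) = y[j]'(by omega) := by
        intro j hj
        have e0 : y[p + j]'(by omega) = (v ++ t)[p + j]'(by
            simp only [List.length_append, hvlen]; omega) := gE2 hv.symm
        have e1 : (v ++ t)[p + j]'(by
            simp only [List.length_append, hvlen]; omega)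
            = t[p + j - v.length]'(by omega) :=
          List.getElem_append_right (by omega)
        have e2 : t[p + j - v.length]'(by omega) = t[j]'hj := gE (by omega)
        have f0 : y[j]'(by omega) = (t ++ z)[j]'(by
            simp only [List.length_append]; omega) := gE2 hz.symm
        have f1 : (t ++ z)[j]'(by simp only [List.length_append]; omega)
            = t[j]'hj := List.getElem_append_left hj
        rw [e0, e1, e2, f0, f1]
      have ht'len : (y.take (t.length - p)).length = t.length - p := by
        simp [List.length_take]
        omega
      have ht'pre : y.take (t.length - p) <+: y := List.take_prefix _ _
      have hdt : y.drop (2 * p) = y.take (t.length - p) := by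
        apply List.ext_getElem
        · rw [List.length_drop, ht'len]
          omega
        · intro i h₁ h₂
          rw [List.getElem_drop, List.getElem_take]
          have hi : i < t.length - p := by
            rw [ht'len] at h₂
            exact h₂
          have e1 : y[2 * p + i]'(by omega) = y[p + (p + i)]'(by omega) :=
            gE (by omega)
          have e2 : y[p + (p + i)]'(by omega) = y[p + i]'(by omega) :=
            hper (p + i) (by omega)
          have e3 : y[p + i]'(by omega) = y[i]'(by omega) := hper i (by omega)
          rw [e1, e2, e3]
      have ht'suf : y.take (t.length - p) <:+ y := by
        refine ⟨y.take (2 * p), ?_⟩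
        rw [← hdt, List.take_append_drop]
      have ht'lt : (y.take (t.length - p)).length < y.length := by
        rw [ht'len]; omega
      have hc' : y[(y.take (t.length - p)).length]'ht'lt < c := by
        have e1 : y[(y.take (t.length - p)).length]'ht'lt
            = y[t.length - p]'(by omega) := gE (by rw [ht'len])
        have e2 : y[p + (t.length - p)]'(by omega)
            = y[t.length - p]'(by omega) := hper (t.length - p) (by omega)
        have e3 : y[p + (t.length - p)]'(by omega) = y[t.length]'hlt :=
          gE (by omega)
        rw [e1, ← e2, e3]
        exact hc
      exact ih y c (y.take (t.length - p)) (by rw [ht'len]; omega)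
        ht'pre ht'suf ht'lt hc'

lemma minimal_form {w x : List α} (hx : x <+: w) (hxne : x ≠ [])
    (hxn : ¬ IsInvLyndonWord x)
    (hmin : ∀ x' : List α, x' <+: w → x' ≠ [] → ¬ IsInvLyndonWord x' →
      x.length ≤ x'.length) :
    ∃ (r u : List α) (a b : α), a < b ∧ x = r ++ [a] ++ u ++ r ++ [b] := by
  have hbad : ∃ s : List α, s <:+ x ∧ s ≠ x ∧ s ≠ [] ∧ ¬ LexLt s x := by
    by_contra hcon
    push_neg at hcon
    exact hxn ⟨hxne, fun s h1 h2 h3 => hcon s h1 h2 h3⟩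
  obtain ⟨s, hs1, hs2, hs3, hs4⟩ := hbad
  have hs4' : ¬ List.Lex (· < ·) s x := hs4
  have hlex : List.Lex (· < ·) x s := lex_total hs4' hs2.symm
  -- split off the last letter of x
  rcases List.eq_nil_or_concat x with hnil | ⟨x'', c, hxc⟩
  · exact absurd hnil hxne
  rw [List.concat_eq_append] at hxc
  subst hxc
  -- x'' is nonempty
  rcases eq_or_ne x'' [] with hx''nil | hx''ne
  · subst hx''nil
    simp only [List.nil_append] at hs1
    rw [List.suffix_cons_iff] at hs1
    rcases hs1 with h | h
    · exact absurd h hs2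
    · exact absurd (List.suffix_nil.mp h) hs3
  -- x'' is an inverse Lyndon word by minimality
  have hx''pre : x'' <+: w := (List.prefix_append x'' [c]).trans hx
  have hLx'' : IsInvLyndonWord x'' := by
    by_contra hcon
    have h0 := hmin x'' hx''pre hx''ne hcon
    simp only [List.length_append, List.length_cons, List.length_nil] at h0
    omega
  -- write s = t ++ [c] with t a suffix of x''
  obtain ⟨p, hp⟩ := hs1
  rcases List.eq_nil_or_concat s with hsnil | ⟨t, c₂, hst⟩
  · exact absurd hsnil hs3
  rw [List.concat_eq_append] at hst
  subst hst
  have hptc : (p ++ t) ++ [c₂] = x'' ++ [c] := by rw [← hp]; simp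
  obtain ⟨hpt, hcc⟩ := List.append_inj' hptc (by simp)
  have hcc2 : c = c₂ := (by simpa using hcc : c₂ = c).symm
  subst hcc2
  have htsuf : t <:+ x'' := ⟨p, hpt⟩
  have htne : t ≠ x'' := by
    intro h
    subst h
    exact hs2 rfl
  have htlt : t.length < x''.length := by
    have h1 := congrArg List.length hpt
    simp only [List.length_append] at h1
    rcases Nat.lt_or_ge t.length x''.length with h | h
    · exact h
    · exfalso
      have hp0 : p = [] := List.length_eq_zero_iff.mp (by omega)
      subst hp0
      exact htne (by simpa using hpt)
  rcases eq_or_ne t [] with ht0 | htne'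
  · -- t = []: s = [c]
    subst ht0
    obtain ⟨d, x₂, hd⟩ := List.exists_cons_of_ne_nil hx''ne
    subst hd
    have hdc : d < c := by
      rw [List.cons_append, List.nil_append] at hlex
      cases hlex with
      | rel h => exact h
      | cons h => exact absurd h List.not_lex_nil
    exact border_lemma (d :: x₂).length (d :: x₂) c [] (Nat.zero_le _)
      List.nil_prefix List.nil_suffix (by simp) (by simpa using hdc)
  · -- t ≠ []: t is a proper nonempty suffix of the inverse Lyndon word x''
    have hltx'' : List.Lex (· < ·) t x'' := hLx''.2 t htsuf htne htne'
    rcases lexlt_decomp hltx'' with hpre | ⟨q, a', b', u', v', hab, hu, hv⟩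
    · -- t is a prefix of x''
      obtain ⟨z, hz⟩ := hpre
      have hzne : z ≠ [] := by
        intro h0
        subst h0
        exact htne (by simpa using hz)
      obtain ⟨z₀, z₁, hz'⟩ := List.exists_cons_of_ne_nil hzne
      subst hz'
      subst hz
      have hz₀c : z₀ < c := by
        have hx1 : (t ++ z₀ :: z₁) ++ [c] = t ++ (z₀ :: (z₁ ++ [c])) := by simp
        rw [hx1] at hlex
        have h0 := lexlt_of_append_left t hlex
        cases h0 with
        | rel h => exact h
        | cons h => exact absurd h List.not_lex_nil
      have hget : (t ++ z₀ :: z₁)[t.length]'htlt = z₀ := by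
        rw [List.getElem_append_right (le_refl _)]
        simp
      exact border_lemma (t ++ z₀ :: z₁).length (t ++ z₀ :: z₁) c t
        (le_of_lt htlt) ⟨z₀ :: z₁, rfl⟩ htsuf htlt (by rw [hget]; exact hz₀c)
    · -- mismatch case: contradiction with ¬ LexLt s x
      exfalso
      apply hs4'
      rw [hu, hv]
      have h0 : List.Lex (· < ·) (a' :: (u' ++ [c])) (b' :: (v' ++ [c])) :=
        List.Lex.rel hab
      have h1 := lexlt_append_left q h0
      simpa [List.append_assoc] using h1

end Helpers

theorem stmt12 {α : Type*} [LinearOrder α] (w : List α)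
    (hw : w ≠ []) (hnw : ¬ IsInvLyndonWord w) (x : List α) :
    (x <+: w ∧ x ≠ [] ∧ ¬ IsInvLyndonWord x ∧
      (∀ x' : List α, x' <+: w → x' ≠ [] → ¬ IsInvLyndonWord x' →
        x.length ≤ x'.length)) ↔
    (x <+: w ∧ (∃ (r u : List α) (a b : α), a < b ∧
        x = r ++ [a] ++ u ++ r ++ [b]) ∧
      (∀ x' : List α, x' <+: w →
        (∃ (r u : List α) (a b : α), a < b ∧
          x' = r ++ [a] ++ u ++ r ++ [b]) →
        x.length ≤ x'.length)) := by
  constructor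
  · rintro ⟨hxw, hxne, hxn, hmin⟩
    refine ⟨hxw, minimal_form hxw hxne hxn hmin, ?_⟩
    rintro x' hx'w ⟨r, u, a, b, hab, hx'⟩
    have hx'ne : x' ≠ [] := by rw [hx']; simp
    have hx'n : ¬ IsInvLyndonWord x' := by rw [hx']; exact form_not_inv_lyndon hab
    exact hmin x' hx'w hx'ne hx'n
  · rintro ⟨hxw, ⟨r, u, a, b, hab, hx⟩, hmin⟩
    have hxne : x ≠ [] := by rw [hx]; simp
    have hxn : ¬ IsInvLyndonWord x := by rw [hx]; exact form_not_inv_lyndon hab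
    refine ⟨hxw, hxne, hxn, ?_⟩
    intro x' hx'w hx'ne hx'n
    have hex : ∃ n : ℕ, ∃ y : List α, y <+: w ∧ y ≠ [] ∧ ¬ IsInvLyndonWord y ∧
        y.length = n := ⟨x'.length, x', hx'w, hx'ne, hx'n, rfl⟩
    classical
    obtain ⟨y, hyw, hyne, hyn, hylen⟩ := Nat.find_spec hex
    have hymin : ∀ y' : List α, y' <+: w → y' ≠ [] → ¬ IsInvLyndonWord y' →
        y.length ≤ y'.length := by
      intro y' h1 h2 h3
      rw [hylen]
      exact Nat.find_min' hex ⟨y', h1, h2, h3, rfl⟩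
    obtain ⟨r', u', a', b', hab', hy⟩ := minimal_form hyw hyne hyn hymin
    calc x.length ≤ y.length := hmin y hyw ⟨r', u', a', b', hab', hy⟩
      _ ≤ x'.length := hymin x' hx'w hx'ne hx'n
end

section
/- If w is an anti-Lyndon word, then for every h ≥ 1 the power w^h is an inverse Lyndon word. -/
def LexLtInv {α : Type*} [LinearOrder α] (x y : List α) : Prop :=
  List.Lex (fun a b => b < a) x y

def IsAntiLyndonWord {α : Type*} [LinearOrder α] (w : List α) : Prop :=
  w ≠ [] ∧ ∀ s : List α, s <:+ w → s ≠ w → s ≠ [] → LexLtInv w s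

private lemma lex_append_right_aux {α : Type*} (r : α → α → Prop) :
    ∀ (s t : List α), t ≠ [] → List.Lex r s (s ++ t) := by
  intro s
  induction s with
  | nil =>
    intro t ht
    cases t with
    | nil => exact absurd rfl ht
    | cons a t => exact List.Lex.nil
  | cons a s ih =>
    intro t ht
    exact List.Lex.cons (ih t ht)

private lemma lex_of_swap_aux {α : Type*} (r : α → α → Prop) :
    ∀ {x y : List α}, List.Lex (fun a b => r b a) x y → ¬ x <+: y →
    ∀ c d : List α, List.Lex r (y ++ c) (x ++ d) := by
  intro x y h
  induction h with
  | nil => intro hp; exact absurd (List.nil_prefix) hp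
  | @rel _ _ a b hab => intro _ c d; exact List.Lex.rel hab
  | @cons a _ _ h ih =>
    intro hp c d
    refine List.Lex.cons (ih (fun hpre => hp ?_) c d)
    exact List.cons_prefix_cons.mpr ⟨rfl, hpre⟩

private lemma suffix_append_decomp {α : Type*} :
    ∀ (a : List α) {s b : List α}, s <:+ a ++ b →
      s <:+ b ∨ ∃ t, t <:+ a ∧ s = t ++ b := by
  intro a
  induction a with
  | nil => intro s b h; exact Or.inl h
  | cons x a ih =>
    intro s b h
    rw [List.cons_append, List.suffix_cons_iff] at h
    rcases h with h | h
    · exact Or.inr ⟨x :: a, List.suffix_refl _, by simpa using h⟩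
    · rcases ih h with h | ⟨t, ht, rfl⟩
      · exact Or.inl h
      · exact Or.inr ⟨t, ht.trans (List.suffix_cons x a), rfl⟩

/-- Every suffix of `w^h` is either `w^k` or `s' ++ w^k` for a proper
nonempty suffix `s'` of `w`. -/
private lemma suffix_pow_decomp {α : Type*} (w : List α) :
    ∀ (h : ℕ) {s : List α}, s <:+ (List.replicate h w).flatten →
      (∃ k ≤ h, s = (List.replicate k w).flatten) ∨
      (∃ s' k, s' <:+ w ∧ s' ≠ w ∧ s' ≠ [] ∧ k < h ∧
        s = s' ++ (List.replicate k w).flatten) := by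
  intro h
  induction h with
  | zero =>
    intro s hs
    simp only [List.replicate, List.flatten] at hs
    left
    exact ⟨0, le_refl 0, by simpa using List.suffix_nil.mp hs⟩
  | succ n ih =>
    intro s hs
    rw [List.replicate_succ, show (w :: List.replicate n w).flatten = w ++ (List.replicate n w).flatten from List.flatten_cons] at hs
    rcases suffix_append_decomp w hs with hs | ⟨t, ht, rfl⟩
    · rcases ih hs with ⟨k, hk, rfl⟩ | ⟨s', k, h1, h2, h3, h4, rfl⟩
      · exact Or.inl ⟨k, hk.trans (Nat.le_succ n), rfl⟩
      · exact Or.inr ⟨s', k, h1, h2, h3, h4.trans (Nat.lt_succ_self n), rfl⟩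
    · by_cases htw : t = w
      · subst htw
        exact Or.inl ⟨n + 1, le_refl _, by simp [List.replicate_succ]⟩
      · by_cases htn : t = []
        · subst htn
          exact Or.inl ⟨n, Nat.le_succ n, by simp⟩
        · exact Or.inr ⟨t, n, ht, htw, htn, Nat.lt_succ_self n, rfl⟩

theorem stmt17 {α : Type*} [LinearOrder α] (w : List α)
    (hw : IsAntiLyndonWord w) :
    ∀ h : ℕ, 1 ≤ h → IsInvLyndonWord (List.replicate h w).flatten := by
  obtain ⟨hwne, hlyn⟩ := hw
  intro h hh
  constructor
  · intro hnil
    rw [List.flatten_eq_nil_iff] at hnil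
    exact hwne (hnil w (List.mem_replicate.mpr ⟨by omega, rfl⟩))
  · intro s hs hne hsne
    rcases suffix_pow_decomp w h hs with ⟨k, hk, rfl⟩ | ⟨s', k, h1, h2, h3, h4, rfl⟩
    · -- s = w^k, proper prefix of w^h
      have hkh : k < h := by
        rcases lt_or_eq_of_le hk with h' | rfl
        · exact h'
        · exact absurd rfl hne
      have : (List.replicate h w).flatten
          = (List.replicate k w).flatten ++ (List.replicate (h - k) w).flatten := by
        rw [← List.flatten_append, ← List.replicate_add, Nat.add_sub_cancel' hkh.le]
      rw [this]
      apply lex_append_right_aux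
      intro hnil
      have := List.flatten_eq_nil_iff.mp hnil
      have hw' : w ∈ List.replicate (h - k) w := by
        refine List.mem_replicate.mpr ⟨?_, rfl⟩
        omega
      exact hwne (this w hw')
    · -- s = s' ++ w^k with s' proper nonempty suffix of w
      have hlex : List.Lex (fun a b => b < a) w s' := hlyn s' h1 h2 h3
      have hnp : ¬ w <+: s' := by
        intro hp
        have h1' := List.IsSuffix.length_le h1
        have h2' := List.IsPrefix.length_le hp
        have : s'.length = w.length := le_antisymm h1' h2'
        exact h2 (List.IsSuffix.eq_of_length h1 this)
      obtain ⟨n, rfl⟩ : ∃ n, h = n + 1 := ⟨h - 1, by omega⟩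
      have : (List.replicate (n + 1) w).flatten = w ++ (List.replicate n w).flatten := by
        simp [List.replicate_succ]
      rw [this]
      exact lex_of_swap_aux (· < ·) hlex hnp _ _
end

section
/- If ℓ_1 and ℓ_2 are anti-Lyndon words and ℓ_2 is a proper prefix of ℓ_1, then the concatenation ℓ_1 ℓ_2 is an inverse Lyndon word. -/
private lemma lex_append_self {α : Type*} [LinearOrder α] :
    ∀ (x t : List α), t ≠ [] → List.Lex (· < ·) x (x ++ t)
  | [], t, ht => by
    cases t with
    | nil => exact absurd rfl ht
    | cons a t => exact List.Lex.nil
  | a :: x, t, ht => List.Lex.cons (lex_append_self x t ht)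

private lemma key_lemma {α : Type*} [LinearOrder α] {x y : List α}
    (h : List.Lex (fun a b => b < a) x y) :
    ∀ u v : List α, y.length < x.length → List.Lex (· < ·) (y ++ u) (x ++ v) := by
  induction h with
  | nil => intro u v hlen; simp at hlen
  | @cons a x' y' h ih =>
      intro u v hlen
      exact List.Lex.cons (ih u v (by simpa using hlen))
  | @rel a b x' y' h =>
      intro u v _
      exact List.Lex.rel h

private lemma suffix_split {α : Type*} {s l1 l2 : List α} (h : s <:+ l1 ++ l2) :
    s <:+ l2 ∨ ∃ t, t <:+ l1 ∧ s = t ++ l2 := by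
  obtain ⟨p, hp⟩ := h
  by_cases hle : p.length ≤ l1.length
  · right
    have hpref : p <+: l1 :=
      List.prefix_of_prefix_length_le ⟨s, hp⟩ (List.prefix_append l1 l2) hle
    obtain ⟨t, ht⟩ := hpref
    refine ⟨t, ⟨p, ht⟩, ?_⟩
    rw [← ht, List.append_assoc] at hp
    exact List.append_cancel_left hp
  · left
    have hpref : l1 <+: p :=
      List.prefix_of_prefix_length_le (List.prefix_append l1 l2) ⟨s, hp⟩ (le_of_not_ge hle)
    obtain ⟨q, hq⟩ := hpref
    refine ⟨q, ?_⟩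
    rw [← hq, List.append_assoc] at hp
    exact List.append_cancel_left hp

theorem stmt18 {α : Type*} [LinearOrder α] (l1 l2 : List α)
    (h1 : IsAntiLyndonWord l1) (h2 : IsAntiLyndonWord l2)
    (hpref : l2 <+: l1) (hne : l2 ≠ l1) :
    IsInvLyndonWord (l1 ++ l2) := by
  obtain ⟨hn1, hs1⟩ := h1
  obtain ⟨hn2, hs2⟩ := h2
  obtain ⟨r, hr⟩ := hpref
  have hrne : r ≠ [] := by
    rintro rfl; exact hne (by simpa using hr)
  refine ⟨by simp [hn1], ?_⟩
  intro s hsuf hsne hsnil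
  rcases suffix_split hsuf with hsl2 | ⟨t, htsuf, rfl⟩
  · by_cases heq : s = l2
    · subst heq
      have : l1 ++ s = s ++ (r ++ s) := by rw [← hr, List.append_assoc]
      rw [this]
      exact lex_append_self s (r ++ s) (by simp [hrne])
    · have hlt : LexLtInv l2 s := hs2 s hsl2 heq hsnil
      have hlen : s.length < l2.length := by
        rcases lt_or_eq_of_le (List.IsSuffix.length_le hsl2) with h | h
        · exact h
        · exact absurd (List.IsSuffix.eq_of_length hsl2 h) heq
      have hkey := key_lemma hlt [] (r ++ l2) hlen
      have heq2 : l1 ++ l2 = l2 ++ (r ++ l2) := by rw [← hr, List.append_assoc]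
      rw [List.append_nil] at hkey
      rw [show (LexLt s (l1 ++ l2)) = List.Lex (· < ·) s (l1 ++ l2) from rfl, heq2]
      exact hkey
  · by_cases hte : t = []
    · subst hte
      simp only [List.nil_append] at hsne ⊢
      have : l1 ++ l2 = l2 ++ (r ++ l2) := by rw [← hr, List.append_assoc]
      rw [this]
      exact lex_append_self l2 (r ++ l2) (by simp [hrne])
    · have htne : t ≠ l1 := by rintro rfl; exact hsne rfl
      have hlt : LexLtInv l1 t := hs1 t htsuf htne hte
      have hlen : t.length < l1.length := by
        rcases lt_or_eq_of_le (List.IsSuffix.length_le htsuf) with h | h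
        · exact h
        · exact absurd (List.IsSuffix.eq_of_length htsuf h) htne
      exact key_lemma hlt l2 l2 hlen
end

section
/- A nonempty word w is an inverse Lyndon word if and only if w is a strict sesquipower of an anti-Lyndon word, i.e., w = (uv)^n u for some words u, v with v nonempty, n ≥ 1, and uv anti-Lyndon. -/
section Helpers
variable {α : Type*} {r : α → α → Prop}

lemma lex_of_prefix' {x y : List α} (hp : x <+: y) (hne : x ≠ y) : List.Lex r x y := by
  obtain ⟨k, rfl⟩ := hp
  cases k with
  | nil => simp at hne
  | cons b k =>
    clear hne
    induction x with
    | nil => exact List.Lex.nil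
    | cons a x ih => exact List.Lex.cons ih

lemma lex_of_diff' : ∀ (x y : List α) (j : ℕ) (a b : α),
    (∀ i, i < j → x[i]? = y[i]?) → x[j]? = some a → y[j]? = some b → r a b →
    List.Lex r x y := by
  intro x
  induction x with
  | nil => intro y j a b _ ha; simp at ha
  | cons c x ih =>
    intro y j a b hagree ha hb hr
    cases y with
    | nil => simp at hb
    | cons d y =>
      cases j with
      | zero =>
        simp only [List.getElem?_cons_zero, Option.some.injEq] at ha hb
        subst ha; subst hb
        exact List.Lex.rel hr
      | succ j =>
        have h0 := hagree 0 (by omega)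
        simp only [List.getElem?_cons_zero, Option.some.injEq] at h0
        subst h0
        refine List.Lex.cons (ih y j a b ?_ (by simpa using ha) (by simpa using hb) hr)
        intro i hi
        have := hagree (i+1) (by omega)
        simpa using this

lemma lex_elim' {x y : List α} (h : List.Lex r x y) :
    x <+: y ∨ ∃ (j : ℕ) (a b : α), (∀ i, i < j → x[i]? = y[i]?) ∧
      x[j]? = some a ∧ y[j]? = some b ∧ r a b := by
  induction h with
  | nil => left; exact List.nil_prefix
  | @rel a l b l' hr => right; exact ⟨0, a, b, fun i hi => absurd hi (by omega), by simp, by simp, hr⟩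
  | @cons a l l' h ih =>
    rcases ih with hp | ⟨j, c, d, hagree, hc, hd, hr⟩
    · left; obtain ⟨t, rfl⟩ := hp; exact ⟨t, rfl⟩
    · right
      refine ⟨j+1, c, d, ?_, by simpa using hc, by simpa using hd, hr⟩
      intro i hi
      cases i with
      | zero => simp
      | succ i => simpa using hagree i (by omega)

lemma getElem?_of_prefix {x y : List α} (hp : x <+: y) (i : ℕ) (hi : i < x.length) :
    y[i]? = x[i]? := by
  obtain ⟨k, rfl⟩ := hp
  rw [List.getElem?_append_left hi]

lemma prefix_of_getElem? {x y : List α} (hlen : x.length ≤ y.length)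
    (h : ∀ i, i < x.length → x[i]? = y[i]?) : x <+: y := by
  rw [List.prefix_iff_eq_take]
  apply List.ext_getElem?
  intro i
  by_cases hi : i < x.length
  · rw [h i hi, List.getElem?_take_of_lt hi]
  · rw [List.getElem?_eq_none (by omega), List.getElem?_eq_none (by simp [List.length_take]; omega)]

lemma length_join_replicate (n : ℕ) (z : List α) :
    ((List.replicate n z).flatten).length = n * z.length := by
  induction n with
  | zero => simp
  | succ n ih =>
    have : (List.replicate (n+1) z).flatten = z ++ (List.replicate n z).flatten := rfl
    rw [this, List.length_append, ih]; ring

lemma getElem?_join_replicate (z : List α) : ∀ (n i : ℕ),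
    ((List.replicate n z).flatten)[i]? =
      if i < n * z.length then z[i % z.length]? else none := by
  intro n
  induction n with
  | zero => intro i; simp
  | succ n ih =>
    intro i
    have hrepl : (List.replicate (n+1) z).flatten = z ++ (List.replicate n z).flatten := rfl
    rw [hrepl]
    by_cases hi : i < z.length
    · rw [List.getElem?_append_left hi, if_pos (by nlinarith [Nat.le_of_lt hi]),
        Nat.mod_eq_of_lt hi]
    · push_neg at hi
      have hz : z.length ≤ i := hi
      rw [List.getElem?_append_right (by simpa using hz), ih]
      have hmod : (i - z.length) % z.length = i % z.length := by
        conv_rhs => rw [← Nat.sub_add_cancel hz, Nat.add_mod_right]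
      rw [hmod]
      have hexp : (n+1) * z.length = n * z.length + z.length := by ring
      rw [hexp]
      congr 1
      simp only [eq_iff_iff]
      omega

end Helpers

theorem stmt19 {α : Type*} [LinearOrder α] (w : List α) (hw : w ≠ []) :
    IsInvLyndonWord w ↔
      ∃ (u v : List α) (n : ℕ), v ≠ [] ∧ 1 ≤ n ∧
        IsAntiLyndonWord (u ++ v) ∧
        w = (List.replicate n (u ++ v)).flatten ++ u := by
  constructor
  · intro hinv
    classical
    set N := w.length with hNdef
    have hN : 0 < N := List.length_pos_iff.mpr hw
    have hex : ∃ q, 0 < q ∧ ∀ i, i + q < N → w[i]? = w[i+q]? :=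
      ⟨N, hN, fun i h => absurd h (by omega)⟩
    set p := Nat.find hex with hpdef
    obtain ⟨hp, hper⟩ := Nat.find_spec hex
    have hpN : p ≤ N := Nat.find_min' hex ⟨hN, fun i h => absurd h (by omega)⟩
    have hnper : ∀ q, 0 < q → q < p → ¬ (∀ i, i + q < N → w[i]? = w[i+q]?) := by
      intro q hq1 hq2 hcon
      exact Nat.find_min hex hq2 ⟨hq1, hcon⟩
    have key : ∀ d, 0 < d → d < p → ∃ j, j + d < N ∧
        (∀ i, i < j → w[d+i]? = w[i]?) ∧
        ∃ a b, w[d+j]? = some a ∧ w[j]? = some b ∧ a < b := by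
      intro d hd1 hd2
      have hdN : d < N := by omega
      have hs : w.drop d <:+ w := List.drop_suffix d w
      have hlen : (w.drop d).length = N - d := by rw [List.length_drop]
      have hsne : w.drop d ≠ w := by
        intro h; have := congrArg List.length h; rw [hlen] at this; omega
      have hsnil : w.drop d ≠ [] := by
        intro h; have := congrArg List.length h; rw [hlen] at this; simp at this; omega
      have hlex := hinv.2 _ hs hsne hsnil
      rcases lex_elim' hlex with hpre | ⟨j, a, b, hagree, ha, hb, hab⟩
      · exfalso
        apply hnper d hd1 hd2
        intro i hi
        have h2 := getElem?_of_prefix hpre i (by rw [hlen]; omega)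
        rw [List.getElem?_drop, show d + i = i + d from Nat.add_comm d i] at h2
        exact h2
      · have hjlen : j < N - d := by
          have := (List.getElem?_eq_some_iff.mp ha).1
          rwa [hlen] at this
        refine ⟨j, by omega, ?_, a, b, ?_, hb, hab⟩
        · intro i hi; have h2 := hagree i hi; rwa [List.getElem?_drop] at h2
        · rw [← List.getElem?_drop]; exact ha
    set z := w.take p with hzdef
    have hzlen : z.length = p := by rw [hzdef, List.length_take]; omega
    have hzchar : ∀ i, i < p → z[i]? = w[i]? := by
      intro i hi; rw [hzdef, List.getElem?_take_of_lt hi]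
    have hanti : IsAntiLyndonWord z := by
      constructor
      · intro h; have := congrArg List.length h; rw [hzlen] at this; simp at this; omega
      · intro t hts htne htnil
        have htd := List.suffix_iff_eq_drop.mp hts
        set c := z.length - t.length with hcdef
        have htlen : t.length ≤ p := by
          have := List.IsSuffix.length_le hts; omega
        have htpos : 0 < t.length := List.length_pos_iff.mpr htnil
        have hc1 : 0 < c := by
          rcases Nat.eq_zero_or_pos c with h0 | h1
          · exfalso; apply htne
            exact List.IsSuffix.eq_of_length hts (by omega)
          · exact h1
        have hc2 : c < p := by omega
        have htlen2 : t.length = p - c := by omega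
        have htchar : ∀ i, i < p - c → t[i]? = w[c+i]? := by
          intro i hi
          rw [htd, List.getElem?_drop, ← hzchar (z.length - t.length + i) (by omega)]
        obtain ⟨j, hjd, hagree, a, b, ha, hb, hab⟩ := key c hc1 hc2
        by_cases hcase : j < p - c
        · apply lex_of_diff' z t j b a
          · intro i hi
            rw [hzchar i (by omega), htchar i (by omega), hagree i hi]
          · rw [hzchar j (by omega)]; exact hb
          · rw [htchar j (by omega)]; exact ha
          · exact hab
        · push_neg at hcase
          exfalso
          by_cases hjp : p ≤ j
          · have e1 : w[j-p]? = w[j]? := by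
              have h2 := hper (j-p) (by omega)
              rwa [show j - p + p = j from by omega] at h2
            have e2 : w[c + (j-p)]? = w[j-p]? := hagree (j-p) (by omega)
            have e3 : w[c + (j-p)]? = w[c+j]? := by
              have h2 := hper (c + (j-p)) (by omega)
              rwa [show c + (j-p) + p = c + j from by omega] at h2
            have : some b = some a := by
              rw [← hb, ← ha, ← e1, ← e2, e3]
            simp only [Option.some.injEq] at this
            subst this
            exact lt_irrefl _ hab
          · push_neg at hjp
            set e := p - c with hedef
            set m := j - e with hmdef
            have hm : m < c := by omega
            have hmj : m < j := by omega
            obtain ⟨j₂, hj₂d, hagree₂, a₂, b₂, ha₂, hb₂, hab₂⟩ :=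
              key e (by omega) (by omega)
            have hA : ∀ i, i < m → w[e+i]? = w[i]? := by
              intro i hi
              have e1 : w[c + (e+i)]? = w[e+i]? := hagree (e+i) (by omega)
              have e2 : w[i]? = w[i+p]? := hper i (by omega)
              rw [show c + (e+i) = i + p from by omega] at e1
              exact (e2.trans e1).symm
            have hBm : w[m]? = some a := by
              have h2 := hper m (by omega)
              rw [show m + p = c + j from by omega] at h2
              rw [h2]; exact ha
            have hBem : w[e+m]? = some b := by
              rw [show e + m = j from by omega]; exact hb
            rcases lt_trichotomy j₂ m with h | h | h
            · have h2 := hA j₂ h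
              rw [ha₂, hb₂] at h2
              simp only [Option.some.injEq] at h2
              subst h2
              exact lt_irrefl _ hab₂
            · subst h
              rw [ha₂] at hBem
              rw [hb₂] at hBm
              simp only [Option.some.injEq] at hBem hBm
              subst hBem; subst hBm
              exact lt_irrefl _ (hab.trans hab₂)
            · have h2 := hagree₂ m h
              rw [hBem, hBm] at h2
              simp only [Option.some.injEq] at h2
              subst h2
              exact lt_irrefl _ hab
    have hmodchar : ∀ i, i < N → w[i]? = w[i % p]? := by
      intro i
      induction i using Nat.strong_induction_on with
      | _ i ih =>
        intro hi
        by_cases hip : i < p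
        · rw [Nat.mod_eq_of_lt hip]
        · push_neg at hip
          have h2 := hper (i - p) (by omega)
          rw [show i - p + p = i from by omega] at h2
          rw [← h2, ih (i-p) (by omega) (by omega)]
          congr 1
          conv_rhs => rw [show i = (i - p) + p from by omega, Nat.add_mod_right]
    set n := N / p with hndef
    set u := z.take (N % p) with hudef
    set v := z.drop (N % p) with hvdef
    have hNp : p * n + N % p = N := Nat.div_add_mod N p
    have hpn : p * n = n * p := Nat.mul_comm p n
    have hmodlt : N % p < p := Nat.mod_lt _ hp
    have hulen : u.length = N % p := by
      rw [hudef, List.length_take]; omega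
    refine ⟨u, v, n, ?_, ?_, ?_, ?_⟩
    · have hvl : v.length = p - N % p := by rw [hvdef, List.length_drop, hzlen]
      intro h; rw [h] at hvl; simp at hvl; omega
    · rw [hndef]; exact (Nat.one_le_div_iff hp).mpr hpN
    · rw [hudef, hvdef, List.take_append_drop]; exact hanti
    · rw [hudef, hvdef, List.take_append_drop, ← hudef]
      apply List.ext_getElem?
      intro i
      by_cases h1 : i < n * p
      · rw [List.getElem?_append_left (by rw [length_join_replicate, hzlen]; exact h1),
          getElem?_join_replicate, hzlen, if_pos h1]
        have hiN : i < N := by omega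
        rw [hmodchar i hiN, ← hzchar (i % p) (Nat.mod_lt _ hp)]
      · push_neg at h1
        rw [List.getElem?_append_right (by rw [length_join_replicate, hzlen]; exact h1),
          length_join_replicate, hzlen]
        by_cases h2 : i < N
        · have hlt : i - n * p < N % p := by omega
          rw [hudef, List.getElem?_take_of_lt hlt, hzchar (i - n*p) (by omega),
            hmodchar i h2]
          congr 1
          conv_lhs => rw [show i = (i - n * p) + p * n from by omega]
          rw [Nat.add_mul_mod_self_left]
          exact Nat.mod_eq_of_lt (by omega)
        · push_neg at h2
          rw [List.getElem?_eq_none (show w.length ≤ i from h2),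
            List.getElem?_eq_none (by rw [hulen]; omega)]
  · rintro ⟨u, v, n, hv, hn, hz, hweq⟩
    set z := u ++ v with hzdef
    set p := z.length with hpdef
    set N := w.length with hNdef
    have hvp : 0 < v.length := List.length_pos_iff.mpr hv
    have hp : 0 < p := by simp only [hpdef, hzdef, List.length_append]; omega
    have hulen : u.length < p := by simp only [hpdef, hzdef, List.length_append]; omega
    have hNlen : N = n * p + u.length := by
      rw [hNdef, hweq, List.length_append, length_join_replicate]
    have hnpbig : p ≤ n * p := Nat.le_mul_of_pos_left p hn
    have hN : 0 < N := by omega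
    have wchar : ∀ i, i < N → w[i]? = z[i % p]? := by
      intro i hi
      conv_lhs => rw [hweq]
      by_cases hcase : i < n * p
      · rw [List.getElem?_append_left (by rw [length_join_replicate]; exact hcase),
          getElem?_join_replicate, if_pos hcase]
      · push_neg at hcase
        rw [List.getElem?_append_right (by rw [length_join_replicate]; exact hcase),
          length_join_replicate]
        have hir : i - n * p < u.length := by omega
        have himod : i % p = i - n * p := by
          conv_lhs => rw [show i = (i - n * p) + p * n from by
            have := Nat.mul_comm p n; omega]
          rw [Nat.add_mul_mod_self_left]
          exact Nat.mod_eq_of_lt (by omega)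
        rw [himod, hzdef, List.getElem?_append_left hir]
    refine ⟨hw, ?_⟩
    intro s hs hsne hsnil
    have hsd := List.suffix_iff_eq_drop.mp hs
    rw [← hNdef] at hsd
    set d := N - s.length with hddef
    have hslen : s.length ≤ N := List.IsSuffix.length_le hs
    have hspos : 0 < s.length := List.length_pos_iff.mpr hsnil
    have hdpos : 1 ≤ d := by
      by_contra h0
      push_neg at h0
      interval_cases d
      · apply hsne; rw [hsd, List.drop_zero]
    have hdlt : d < N := by omega
    have hslen2 : s.length = N - d := by omega
    have schar : ∀ i, s[i]? = w[d + i]? := by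
      intro i; rw [hsd, List.getElem?_drop]
    set r := d % p with hrdef
    have hrlt : r < p := Nat.mod_lt _ hp
    have hdecomp : d = p * (d / p) + r := (Nat.div_add_mod d p).symm
    have hmodshift : ∀ i, (d + i) % p = (r + i) % p := by
      intro i
      conv_lhs => rw [show d + i = (r + i) + p * (d / p) from by omega]
      rw [Nat.add_mul_mod_self_left]
    rcases Nat.eq_zero_or_pos r with hr0 | hr1
    · -- s is a prefix of w
      apply lex_of_prefix' ?_ hsne
      apply prefix_of_getElem? hslen
      intro i hi
      rw [schar i, wchar (d + i) (by omega), hmodshift i, hr0, Nat.zero_add,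
        ← wchar i (by omega)]
    · -- r ≥ 1
      set t := z.drop r with htdef
      have htlen : t.length = p - r := by rw [htdef, List.length_drop]
      have hts : t <:+ z := List.drop_suffix r z
      have htne : t ≠ z := by
        intro h; have := congrArg List.length h; rw [htlen] at this; omega
      have htnil : t ≠ [] := by
        intro h; have := congrArg List.length h; rw [htlen] at this; simp at this; omega
      have hlex := hz.2 t hts htne htnil
      rcases lex_elim' hlex with hpre | ⟨j, b, a, hagree, hbj, haj, hba⟩
      · exfalso
        have := List.IsPrefix.length_le hpre
        rw [htlen] at this
        omega
      · have hjt : j < t.length := (List.getElem?_eq_some_iff.mp haj).1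
        have hjlen : j < p - r := by omega
        have htchar : ∀ i, t[i]? = z[r + i]? := by
          intro i; rw [htdef, List.getElem?_drop]
        have hagz : ∀ i, i < j → z[i]? = z[r + i]? :=
          fun i hi => (hagree i hi).trans (htchar i)
        have hcommon : ∀ i, i < j → i < s.length → s[i]? = w[i]? := by
          intro i hij his
          rw [schar i, wchar (d + i) (by omega), hmodshift i,
            Nat.mod_eq_of_lt (show r + i < p by omega), ← hagz i hij,
            wchar i (by omega), Nat.mod_eq_of_lt (show i < p by omega)]
        by_cases hcase : s.length ≤ j
        · apply lex_of_prefix' ?_ hsne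
          apply prefix_of_getElem? hslen
          intro i hi
          exact hcommon i (by omega) hi
        · push_neg at hcase
          apply lex_of_diff' s w j a b
          · intro i hi; exact hcommon i hi (by omega)
          · rw [schar j, wchar (d + j) (by omega), hmodshift j,
              Nat.mod_eq_of_lt (show r + j < p by omega), ← htchar j]
            exact haj
          · rw [wchar j (by omega), Nat.mod_eq_of_lt (show j < p by omega)]
            exact hbj
          · exact hba
end
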